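/- For positive integers n, m, r, k with k < n, the number of permutations σ of [n] with exactly m r-excedances, last value σ(n) = k, and σ⁻¹(n) > n − r equals (r−1) times the number of permutations of [n−1] with exactly m r-excedances ending in k. -/

import Mathlib

/-- Number of `r`-descents of a permutation `σ` of `[n]` (positions `i < n` with
`σ(i) ≥ σ(i+1) + r`), encoded on `Fin n`. -/
def rDesc (n r : ℕ) (σ : Equiv.Perm (Fin n)) : ℕ :=
  (Finset.univ.filter fun i : Fin n =>
    (if h : (i : ℕ) + 1 < n then ((σ ⟨(i : ℕ) + 1, h⟩ : Fin n) : ℕ) else n) + r ≤ (σ i : ℕ)).card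

/-- Number of `r`-excedances of a permutation `σ` of `[n]` (positions `i ≤ n` with
`σ(i) ≥ i + r`), encoded on `Fin n`. -/
def rExc (n r : ℕ) (σ : Equiv.Perm (Fin n)) : ℕ :=
  (Finset.univ.filter fun i : Fin n => (i : ℕ) + r ≤ (σ i : ℕ)).card

/-- The last value `σ(n)` of a permutation of `[n]` (as an element of `{1,…,n}`). -/
def lastVal (n : ℕ) (σ : Equiv.Perm (Fin n)) : ℕ :=
  if h : 0 < n then ((σ ⟨n - 1, Nat.sub_lt h Nat.one_pos⟩ : Fin n) : ℕ) + 1 else 0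

/-- `Ar r n m k` = number of permutations of `[n]` with exactly `m` `r`-descents
whose last value is `k`. -/
def Ar (r n m k : ℕ) : ℕ :=
  (Finset.univ.filter fun σ : Equiv.Perm (Fin n) => rDesc n r σ = m ∧ lastVal n σ = k).card

/-- The position (in `{1,…,n}`) of the value `n` in `σ`. -/
def posTop (n : ℕ) (σ : Equiv.Perm (Fin n)) : ℕ :=
  if h : 0 < n then ((σ⁻¹ ⟨n - 1, Nat.sub_lt h Nat.one_pos⟩ : Fin n) : ℕ) + 1 else 0

namespace Stmt7Aux

open Equiv Finset

lemma optionCongr_removeNone' {α : Type*} (E : Equiv.Perm (Option α)) (h : E none = none) :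
    Equiv.optionCongr (Equiv.removeNone E) = E := by
  apply Equiv.ext
  intro x
  cases x with
  | none =>
      simp only [Equiv.optionCongr_apply, Option.map_none]
      exact h.symm
  | some a =>
      have h2 : ∃ x', E (some a) = some x' := by
        cases hx : E (some a) with
        | none => exact absurd (E.injective (hx.trans h.symm)) (by simp)
        | some b => exact ⟨b, rfl⟩
      simp only [Equiv.optionCongr_apply, Option.map_some]
      exact Equiv.removeNone_some E h2

variable {M : ℕ}

def extPerm (σ : Equiv.Perm (Fin M)) : Equiv.Perm (Fin (M + 1)) :=
  Equiv.permCongr finSuccEquivLast.symm σ.optionCongr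

lemma extPerm_castSucc (σ : Equiv.Perm (Fin M)) (i : Fin M) :
    extPerm σ i.castSucc = (σ i).castSucc := by
  simp [extPerm]

lemma extPerm_last (σ : Equiv.Perm (Fin M)) : extPerm σ (Fin.last M) = Fin.last M := by
  simp [extPerm]

lemma extPerm_injective : Function.Injective (extPerm (M := M)) := by
  intro a b h
  apply Equiv.ext
  intro i
  have h2 : extPerm a i.castSucc = extPerm b i.castSucc := by rw [h]
  rw [extPerm_castSucc, extPerm_castSucc] at h2
  exact Fin.castSucc_injective _ h2

lemma extPerm_surj (τ : Equiv.Perm (Fin (M + 1))) (h : τ (Fin.last M) = Fin.last M) :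
    ∃ σ, extPerm σ = τ := by
  refine ⟨Equiv.removeNone (Equiv.permCongr finSuccEquivLast τ), ?_⟩
  unfold extPerm
  rw [optionCongr_removeNone' _ (by simp [h])]
  exact (Equiv.permCongr finSuccEquivLast).symm_apply_apply τ

def Phi (M : ℕ) (p : Fin (M + 2)) (σ : Equiv.Perm (Fin (M + 1))) : Equiv.Perm (Fin (M + 2)) :=
  extPerm σ * Equiv.swap (Fin.castSucc (Fin.last M)) (Fin.last (M + 1)) *
    Equiv.swap p (Fin.castSucc (Fin.last M))

lemma Phi_self (p : Fin (M + 2)) (σ : Equiv.Perm (Fin (M + 1))) :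
    Phi M p σ p = Fin.last (M + 1) := by
  unfold Phi
  rw [Equiv.Perm.mul_apply, Equiv.Perm.mul_apply, Equiv.swap_apply_left, Equiv.swap_apply_left]
  exact extPerm_last σ

lemma Phi_last (p : Fin (M + 2)) (hp : (p : ℕ) ≤ M) (σ : Equiv.Perm (Fin (M + 1))) :
    Phi M p σ (Fin.last (M + 1)) = Fin.castSucc (σ (Fin.last M)) := by
  unfold Phi
  have e1 : Equiv.swap p (Fin.castSucc (Fin.last M)) (Fin.last (M + 1)) = Fin.last (M + 1) :=
    Equiv.swap_apply_of_ne_of_ne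
      (Fin.ne_of_val_ne (by simp only [Fin.val_last]; omega))
      (Fin.ne_of_val_ne (by simp only [Fin.val_last, Fin.coe_castSucc]; omega))
  have e2 : Equiv.swap (Fin.castSucc (Fin.last M)) (Fin.last (M + 1)) (Fin.last (M + 1)) =
      Fin.castSucc (Fin.last M) := Equiv.swap_apply_right _ _
  rw [Equiv.Perm.mul_apply, Equiv.Perm.mul_apply, e1, e2]
  exact extPerm_castSucc σ (Fin.last M)

lemma Phi_sl (p : Fin (M + 2)) (hp : (p : ℕ) < M) (σ : Equiv.Perm (Fin (M + 1))) :
    Phi M p σ (Fin.castSucc (Fin.last M)) = Fin.castSucc (σ ⟨(p : ℕ), by omega⟩) := by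
  unfold Phi
  have e1 : Equiv.swap p (Fin.castSucc (Fin.last M)) (Fin.castSucc (Fin.last M)) = p :=
    Equiv.swap_apply_right _ _
  have e2 : Equiv.swap (Fin.castSucc (Fin.last M)) (Fin.last (M + 1)) p = p :=
    Equiv.swap_apply_of_ne_of_ne
      (Fin.ne_of_val_ne (by simp only [Fin.val_last, Fin.coe_castSucc]; omega))
      (Fin.ne_of_val_ne (by simp only [Fin.val_last]; omega))
  rw [Equiv.Perm.mul_apply, Equiv.Perm.mul_apply, e1, e2]
  exact extPerm_castSucc σ ⟨(p : ℕ), by omega⟩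

lemma Phi_generic (p : Fin (M + 2)) (σ : Equiv.Perm (Fin (M + 1))) (x : Fin (M + 2))
    (h1 : (x : ℕ) ≠ (p : ℕ)) (h2 : (x : ℕ) ≠ M) (h3 : (x : ℕ) ≠ M + 1) :
    Phi M p σ x = Fin.castSucc (σ ⟨(x : ℕ), by omega⟩) := by
  unfold Phi
  have e1 : Equiv.swap p (Fin.castSucc (Fin.last M)) x = x :=
    Equiv.swap_apply_of_ne_of_ne (Fin.ne_of_val_ne h1)
      (Fin.ne_of_val_ne (by simp only [Fin.val_last, Fin.coe_castSucc]; omega))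
  have e2 : Equiv.swap (Fin.castSucc (Fin.last M)) (Fin.last (M + 1)) x = x :=
    Equiv.swap_apply_of_ne_of_ne
      (Fin.ne_of_val_ne (by simp only [Fin.val_last, Fin.coe_castSucc]; omega))
      (Fin.ne_of_val_ne (by simp only [Fin.val_last]; omega))
  rw [Equiv.Perm.mul_apply, Equiv.Perm.mul_apply, e1, e2]
  exact extPerm_castSucc σ ⟨(x : ℕ), by omega⟩

lemma Phi_inv (p : Fin (M + 2)) (σ : Equiv.Perm (Fin (M + 1))) :
    (Phi M p σ)⁻¹ (Fin.last (M + 1)) = p := by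
  rw [Equiv.Perm.inv_def, Equiv.symm_apply_eq]
  exact (Phi_self p σ).symm

lemma filt_eq (r : ℕ) (hr : 1 ≤ r) (p : Fin (M + 2)) (hp1 : M + 2 - r ≤ (p : ℕ))
    (hp2 : (p : ℕ) ≤ M) (σ : Equiv.Perm (Fin (M + 1))) :
    (Finset.univ.filter fun i : Fin (M + 2) => (i : ℕ) + r ≤ ((Phi M p σ) i : ℕ)) =
      (Finset.univ.filter fun i : Fin (M + 1) => (i : ℕ) + r ≤ (σ i : ℕ)).map
        ⟨Fin.castSucc, Fin.castSucc_injective _⟩ := by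
  have hpr : M + 2 ≤ (p : ℕ) + r := by omega
  ext x
  simp only [mem_filter, mem_map, mem_univ, true_and, Function.Embedding.coeFn_mk]
  constructor
  · intro hx
    have hx3 : (x : ℕ) ≠ M + 1 := by
      intro h
      have hxx : x = Fin.last (M + 1) := Fin.ext (by simp only [Fin.val_last]; omega)
      rw [hxx, Phi_last p hp2 σ] at hx
      simp only [Fin.coe_castSucc, Fin.val_last] at hx
      have := (σ (Fin.last M)).isLt
      omega
    have hx1 : (x : ℕ) ≠ (p : ℕ) := by
      intro h
      have hxx : x = p := Fin.ext h
      rw [hxx, Phi_self p σ] at hx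
      simp only [Fin.val_last] at hx
      omega
    have hx2 : (x : ℕ) ≠ M := by
      intro h
      have hpm : (p : ℕ) ≠ M := fun hc => hx1 (h.trans hc.symm)
      have hxx : x = Fin.castSucc (Fin.last M) := Fin.ext (by
        simp only [Fin.coe_castSucc, Fin.val_last]; omega)
      rw [hxx, Phi_sl p (by omega) σ] at hx
      simp only [Fin.coe_castSucc, Fin.val_last] at hx
      have := (σ ⟨(p : ℕ), by omega⟩).isLt
      omega
    refine ⟨⟨(x : ℕ), by omega⟩, ?_, by ext; simp⟩
    rw [Phi_generic p σ x hx1 hx2 hx3] at hx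
    simpa using hx
  · rintro ⟨y, hy, rfl⟩
    have hyl := (σ y).isLt
    have hyi := y.isLt
    have hy1 : ((y.castSucc : Fin (M + 2)) : ℕ) ≠ (p : ℕ) := by
      simp only [Fin.coe_castSucc]; omega
    have hy2 : ((y.castSucc : Fin (M + 2)) : ℕ) ≠ M := by
      simp only [Fin.coe_castSucc]
      intro h
      omega
    have hy3 : ((y.castSucc : Fin (M + 2)) : ℕ) ≠ M + 1 := by
      simp only [Fin.coe_castSucc]
      omega
    rw [Phi_generic p σ y.castSucc hy1 hy2 hy3]
    simp only [Fin.coe_castSucc]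
    exact hy

lemma rExc_Phi (r : ℕ) (hr : 1 ≤ r) (p : Fin (M + 2)) (hp1 : M + 2 - r ≤ (p : ℕ))
    (hp2 : (p : ℕ) ≤ M) (σ : Equiv.Perm (Fin (M + 1))) :
    rExc (M + 2) r (Phi M p σ) = rExc (M + 1) r σ := by
  unfold rExc
  rw [filt_eq r hr p hp1 hp2 σ, Finset.card_map]

lemma lastVal_eq (N : ℕ) (σ : Equiv.Perm (Fin (N + 1))) :
    lastVal (N + 1) σ = (σ (Fin.last N) : ℕ) + 1 := by
  unfold lastVal
  rw [dif_pos (by omega)]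
  rfl

lemma posTop_eq (N : ℕ) (σ : Equiv.Perm (Fin (N + 1))) :
    posTop (N + 1) σ = ((σ⁻¹ (Fin.last N)) : ℕ) + 1 := by
  unfold posTop
  rw [dif_pos (by omega)]
  rfl

lemma rExc_zero (N r : ℕ) (hr : N + 1 ≤ r) (σ : Equiv.Perm (Fin N)) : rExc N r σ = 0 := by
  unfold rExc
  rw [Finset.card_eq_zero, Finset.filter_eq_empty_iff]
  intro i _
  have := (σ i).isLt
  omega

end Stmt7Aux

/-- For `k < n`: the number of permutations of `[n]` with `m` `r`-excedances, last value
`k`, and `σ⁻¹(n) > n - r` is `(r-1)` times the number of permutations of `[n-1]` with `m`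
`r`-excedances ending in `k`. -/
theorem stmt7 (n m r k : ℕ) (hn : 1 ≤ n) (hm : 1 ≤ m) (hr : 1 ≤ r) (hk : 1 ≤ k)
    (hkn : k < n) :
    (Finset.univ.filter fun σ : Equiv.Perm (Fin n) =>
        rExc n r σ = m ∧ lastVal n σ = k ∧ n - r < posTop n σ).card =
    (r - 1) *
      (Finset.univ.filter fun σ : Equiv.Perm (Fin (n - 1)) =>
        rExc (n - 1) r σ = m ∧ lastVal (n - 1) σ = k).card := by
  classical
  open Stmt7Aux in
  obtain ⟨M, rfl⟩ : ∃ M, n = M + 2 := ⟨n - 2, by omega⟩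
  rw [show (M + 2 - 1) = M + 1 from rfl]
  by_cases hrn : M + 3 ≤ r
  · have e1 : (Finset.univ.filter fun σ : Equiv.Perm (Fin (M + 2)) =>
        rExc (M + 2) r σ = m ∧ lastVal (M + 2) σ = k ∧ M + 2 - r < posTop (M + 2) σ) = ∅ := by
      rw [Finset.filter_eq_empty_iff]
      rintro σ - ⟨h1, -, -⟩
      rw [rExc_zero (M + 2) r (by omega) σ] at h1
      omega
    have e2 : (Finset.univ.filter fun σ : Equiv.Perm (Fin (M + 1)) =>
        rExc (M + 1) r σ = m ∧ lastVal (M + 1) σ = k) = ∅ := by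
      rw [Finset.filter_eq_empty_iff]
      rintro σ - ⟨h1, -⟩
      rw [rExc_zero (M + 1) r (by omega) σ] at h1
      omega
    rw [e1, e2]
    simp
  · -- main case : r ≤ M + 2
    have hbij : ((Finset.Ico (M + 2 - r) (M + 1)) ×ˢ
        (Finset.univ.filter fun σ : Equiv.Perm (Fin (M + 1)) =>
          rExc (M + 1) r σ = m ∧ lastVal (M + 1) σ = k)).card =
        (Finset.univ.filter fun σ : Equiv.Perm (Fin (M + 2)) =>
          rExc (M + 2) r σ = m ∧ lastVal (M + 2) σ = k ∧ M + 2 - r < posTop (M + 2) σ).card := by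
      refine Finset.card_bij
        (fun a ha => Phi M ⟨a.1, by
          have h := (Finset.mem_product.mp ha).1
          rw [Finset.mem_Ico] at h
          omega⟩ a.2) ?_ ?_ ?_
      · -- maps into the target filter
        intro a ha
        obtain ⟨hp, hT⟩ := Finset.mem_product.mp ha
        rw [Finset.mem_Ico] at hp
        rw [Finset.mem_filter] at hT
        obtain ⟨-, hT1, hT2⟩ := hT
        have hp2 : a.1 ≤ M := by omega
        refine Finset.mem_filter.mpr ⟨Finset.mem_univ _, ?_, ?_, ?_⟩
        · rw [rExc_Phi r hr _ (by simpa using hp.1) (by simpa using hp2)]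
          exact hT1
        · rw [lastVal_eq (M + 1), Phi_last _ (by simpa using hp2)]
          rw [lastVal_eq M] at hT2
          simpa using hT2
        · rw [posTop_eq (M + 1), Phi_inv]
          simp only
          omega
      · -- injective
        rintro ⟨p1, σ1⟩ ha1 ⟨p2, σ2⟩ ha2 h
        obtain ⟨hp1, -⟩ := Finset.mem_product.mp ha1
        obtain ⟨hp2, -⟩ := Finset.mem_product.mp ha2
        rw [Finset.mem_Ico] at hp1 hp2
        simp only at h
        have hpp : p1 = p2 := by
          by_contra hne
          have happ : Phi M ⟨p1, by omega⟩ σ1 ⟨p1, by omega⟩ =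
              Phi M ⟨p2, by omega⟩ σ2 ⟨p1, by omega⟩ := by rw [h]
          rw [Phi_self] at happ
          by_cases hm1 : p1 = M
          · have hx : (⟨p1, by omega⟩ : Fin (M + 2)) = Fin.castSucc (Fin.last M) :=
              Fin.ext (by simp only [Fin.coe_castSucc, Fin.val_last]; omega)
            rw [hx, Phi_sl _ (by simp only; omega)] at happ
            have := congrArg Fin.val happ
            simp only [Fin.val_last, Fin.coe_castSucc] at this
            have := (σ2 ⟨p2, by omega⟩).isLt
            omega
          · rw [Phi_generic _ σ2 _ (by simp only; omega) (by simp only; omega)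
              (by simp only; omega)] at happ
            have := congrArg Fin.val happ
            simp only [Fin.val_last, Fin.coe_castSucc] at this
            have := (σ2 ⟨p1, by omega⟩).isLt
            omega
        subst hpp
        have hσ : σ1 = σ2 := by
          unfold Phi at h
          have h2 := mul_right_cancel h
          have h3 := mul_right_cancel h2
          exact extPerm_injective h3
        rw [hσ]
      · -- surjective
        intro σ hσ
        rw [Finset.mem_filter] at hσ
        obtain ⟨-, h1, h2, h3⟩ := hσ
        rw [lastVal_eq (M + 1)] at h2
        rw [posTop_eq (M + 1)] at h3
        have hlt := (σ⁻¹ (Fin.last (M + 1))).isLt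
        have hpM : ((σ⁻¹ (Fin.last (M + 1)) : Fin (M + 2)) : ℕ) ≤ M := by
          by_contra hc
          have hx : (σ⁻¹ (Fin.last (M + 1)) : Fin (M + 2)) = Fin.last (M + 1) :=
            Fin.ext (by simp only [Fin.val_last]; omega)
          have : σ (Fin.last (M + 1)) = Fin.last (M + 1) := by
            conv_lhs => rw [← hx]
            exact Equiv.apply_symm_apply σ _
          rw [this] at h2
          simp only [Fin.val_last] at h2
          omega
        set p : Fin (M + 2) := σ⁻¹ (Fin.last (M + 1)) with hpdef
        have hσp : σ p = Fin.last (M + 1) := Equiv.apply_symm_apply σ _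
        have hτ : (σ * Equiv.swap p (Fin.castSucc (Fin.last M)) *
            Equiv.swap (Fin.castSucc (Fin.last M)) (Fin.last (M + 1))) (Fin.last (M + 1)) =
            Fin.last (M + 1) := by
          rw [Equiv.Perm.mul_apply, Equiv.Perm.mul_apply, Equiv.swap_apply_right,
            Equiv.swap_apply_right]
          exact hσp
        obtain ⟨σ', hσ'⟩ := extPerm_surj _ hτ
        have hΦ : Phi M p σ' = σ := by
          unfold Phi
          rw [hσ']
          simp only [mul_assoc, Equiv.swap_mul_self_mul, Equiv.swap_mul_self, mul_one]
        refine ⟨((p : ℕ), σ'), ?_, ?_⟩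
        · refine Finset.mem_product.mpr ⟨?_, ?_⟩
          · rw [Finset.mem_Ico]
            constructor
            · omega
            · omega
          · rw [Finset.mem_filter]
            refine ⟨Finset.mem_univ _, ?_, ?_⟩
            · show rExc (M + 1) r σ' = m
              have := rExc_Phi r hr p (by omega) hpM σ'
              rw [hΦ] at this
              omega
            · show lastVal (M + 1) σ' = k
              have hl := Phi_last p hpM σ'
              rw [hΦ] at hl
              rw [lastVal_eq M]
              rw [hl] at h2
              simp only [Fin.coe_castSucc] at h2
              omega
        · simpa using hΦ
    rw [← hbij, Finset.card_product, Nat.card_Ico]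
    congr 1
    omega
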